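/- Let K be a field of characteristic zero containing all roots of unity, d ≥ 3 an odd integer, V a d-dimensional K-vector space, and φ : V × V → K a nondegenerate symmetric K-bilinear form that is anisotropic. Let G be a finite subgroup of PO(V,φ) = GO(V,φ)/(K*·1_V). Then G is commutative, every non-identity element of G has order 2, and the order of G divides 2^{d-1}. -/

import Mathlib

variable {K V : Type*} [Field K] [AddCommGroup V] [Module K V]

/-- The group of similitudes `GO(V,φ)`: the subgroup of the group of `K`-linear
automorphisms of `V` consisting of those `u` for which there is `μ ∈ K*` with
`φ(ux,uy) = μ·φ(x,y)` for all `x,y ∈ V`. -/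
def similitudeSubgroup (φ : LinearMap.BilinForm K V) : Subgroup (V ≃ₗ[K] V) where
  carrier := {u | ∃ μ : K, μ ≠ 0 ∧ ∀ x y : V, φ (u x) (u y) = μ * φ x y}
  one_mem' := ⟨1, one_ne_zero, fun x y => by rw [one_mul]; rfl⟩
  mul_mem' := by
    rintro u v ⟨μ, hμ, hu⟩ ⟨ν, hν, hv⟩
    refine ⟨μ * ν, mul_ne_zero hμ hν, fun x y => ?_⟩
    have h : φ ((u * v) x) ((u * v) y) = φ (u (v x)) (u (v y)) := rfl
    rw [h, hu, hv]; ring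
  inv_mem' := by
    rintro u ⟨μ, hμ, hu⟩
    refine ⟨μ⁻¹, inv_ne_zero hμ, fun x y => ?_⟩
    have h := hu ((u⁻¹ : V ≃ₗ[K] V) x) ((u⁻¹ : V ≃ₗ[K] V) y)
    rw [show u ((u⁻¹ : V ≃ₗ[K] V) x) = x from u.apply_symm_apply x,
      show u ((u⁻¹ : V ≃ₗ[K] V) y) = y from u.apply_symm_apply y] at h
    rw [h, inv_mul_cancel_left₀ hμ]

/-- The central subgroup `K*·1_V` of `GO(V,φ)` consisting of the nonzero scalar
automorphisms. -/
def scalarSubgroup (φ : LinearMap.BilinForm K V) : Subgroup (similitudeSubgroup φ) where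
  carrier := {u | ∃ c : K, c ≠ 0 ∧ ∀ x : V, (u : V ≃ₗ[K] V) x = c • x}
  one_mem' := ⟨1, one_ne_zero, fun x => by simp⟩
  mul_mem' := by
    rintro u v ⟨c, hc, hcu⟩ ⟨d, hd, hdv⟩
    refine ⟨c * d, mul_ne_zero hc hd, fun x => ?_⟩
    have h : ((u * v : similitudeSubgroup φ) : V ≃ₗ[K] V) x
        = (u : V ≃ₗ[K] V) ((v : V ≃ₗ[K] V) x) := rfl
    rw [h, hdv, map_smul, hcu, smul_smul, mul_comm]
  inv_mem' := by
    rintro u ⟨c, hc, hcu⟩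
    refine ⟨c⁻¹, inv_ne_zero hc, fun x => ?_⟩
    apply (u : V ≃ₗ[K] V).injective
    rw [show ((u⁻¹ : similitudeSubgroup φ) : V ≃ₗ[K] V) x = (u : V ≃ₗ[K] V).symm x from rfl,
      (u : V ≃ₗ[K] V).apply_symm_apply, map_smul, hcu, smul_smul, inv_mul_cancel₀ hc, one_smul]

instance scalarSubgroup_normal (φ : LinearMap.BilinForm K V) : (scalarSubgroup φ).Normal := by
  constructor
  rintro n ⟨c, hc, hn⟩ g
  refine ⟨c, hc, fun x => ?_⟩
  have h1 : ((g * n * g⁻¹ : similitudeSubgroup φ) : V ≃ₗ[K] V) x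
      = (g : V ≃ₗ[K] V) ((n : V ≃ₗ[K] V) ((g : V ≃ₗ[K] V).symm x)) := rfl
  rw [h1, hn, map_smul, (g : V ≃ₗ[K] V).apply_symm_apply]

/-- The projective orthogonal group `PO(V,φ) = GO(V,φ)/(K*·1_V)`. -/
abbrev projOrthogonalGroup (φ : LinearMap.BilinForm K V) :=
  similitudeSubgroup φ ⧸ scalarSubgroup φ


section Aux

open Polynomial Module

universe v

variable [CharZero K]




/-- Core: an isometry of an anisotropic form which has finite order squares to 1. -/
theorem core_sq [FiniteDimensional K V] (φ : LinearMap.BilinForm K V)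
    (haniso : ∀ v : V, v ≠ 0 → φ v v ≠ 0)
    (w : Module.End K V) (hiso : ∀ x y, φ (w x) (w y) = φ x y)
    (m : ℕ) (hm : 0 < m) (ζ : K) (hζ : IsPrimitiveRoot ζ m) (hwm : w ^ m = 1) :
    w ^ 2 = 1 := by
  classical
  set S := Polynomial.nthRootsFinset m (1 : K) with hS
  have hsplit : (X : K[X]) ^ m - 1 = ∏ l ∈ S, (X - C l) :=
    X_pow_sub_one_eq_prod hm hζ
  set T := S.filter (fun l => l * l = 1) with hT
  set T' := S.filter (fun l => ¬ l * l = 1) with hT'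
  have hAB : (∏ l ∈ T, (X - C l)) * (∏ l ∈ T', (X - C l)) = (X : K[X]) ^ m - 1 := by
    rw [hT, hT', Finset.prod_filter_mul_prod_filter_not, ← hsplit]
  have h0 : Polynomial.aeval w ((X : K[X]) ^ m - 1) = 0 := by
    simp [hwm]
  -- injective factors
  have hfac : ∀ l : K, l * l ≠ 1 → Function.Injective ⇑(Polynomial.aeval w (X - C l)) := by
    intro l hl
    have : Polynomial.aeval w (X - C l) = w - l • (1 : Module.End K V) := by
      simp [Polynomial.aeval_X, Algebra.algebraMap_eq_smul_one]
    rw [this]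
    rw [← LinearMap.ker_eq_bot]
    rw [Submodule.eq_bot_iff]
    intro x hx
    have hx' : w x = l • x := by
      have := hx
      simp only [LinearMap.mem_ker, LinearMap.sub_apply, LinearMap.smul_apply,
        Module.End.one_apply, sub_eq_zero] at this
      exact this
    by_contra hxne
    have h1 : φ (w x) (w x) = φ x x := hiso x x
    rw [hx'] at h1
    simp only [map_smul, LinearMap.smul_apply, smul_eq_mul] at h1
    have h2 : (l * l - 1) * φ x x = 0 := by ring_nf; ring_nf at h1; linear_combination h1
    rcases mul_eq_zero.mp h2 with h | h
    · exact hl (by have := sub_eq_zero.mp h; linear_combination this)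
    · exact haniso x hxne h
  have hBinj : Function.Injective ⇑(Polynomial.aeval w (∏ l ∈ T', (X - C l))) := by
    refine Finset.prod_induction _ (fun q => Function.Injective ⇑(Polynomial.aeval w q)) ?_ ?_ ?_
    · intro a b ha hb
      have : ⇑(Polynomial.aeval w (a * b)) = ⇑(Polynomial.aeval w a) ∘ ⇑(Polynomial.aeval w b) := by
        rw [map_mul]; rfl
      rw [this]; exact ha.comp hb
    · simp only [map_one]
      intro x y h
      simpa using h
    · intro l hl
      exact hfac l (Finset.mem_filter.mp hl).2
  have hBsurj : Function.Surjective ⇑(Polynomial.aeval w (∏ l ∈ T', (X - C l))) :=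
    (LinearMap.injective_iff_surjective).mp hBinj
  have hA0 : Polynomial.aeval w (∏ l ∈ T, (X - C l)) = 0 := by
    have h := congrArg (Polynomial.aeval w) hAB
    rw [map_mul, h0] at h
    ext x
    obtain ⟨y, hy⟩ := hBsurj x
    have := congrArg (fun f : Module.End K V => f y) h
    simp only [Module.End.mul_apply, LinearMap.zero_apply] at this
    rw [hy] at this
    simpa using this
  have hTsub : T ⊆ ({1, -1} : Finset K) := by
    intro l hl
    have := (Finset.mem_filter.mp hl).2
    rcases mul_self_eq_one_iff.mp this with h | h <;> simp [h]
  have hkey : Polynomial.aeval w (∏ l ∈ ({1, -1} : Finset K), (X - C l)) = 0 := by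
    rw [← Finset.prod_sdiff hTsub, map_mul, hA0, mul_zero]
  have hpair : (∏ l ∈ ({1, -1} : Finset K), ((X : K[X]) - C l)) = X ^ 2 - 1 := by
    rw [Finset.prod_pair (by norm_num : (1 : K) ≠ -1)]
    simp only [map_neg, map_one]
    ring
  rw [hpair] at hkey
  simp only [map_sub, map_pow, Polynomial.aeval_X, map_one] at hkey
  exact sub_eq_zero.mp hkey




theorem mu_square [FiniteDimensional K V] (hodd : Odd (finrank K V))
    (φ : LinearMap.BilinForm K V)
    (hnondeg : ∀ x : V, (∀ y : V, φ x y = 0) → x = 0)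
    (u : V ≃ₗ[K] V) (μ : K) (hμ : μ ≠ 0)
    (hu : ∀ x y : V, φ (u x) (u y) = μ * φ x y) :
    ∃ ν : K, ν ≠ 0 ∧ ν ^ 2 = μ := by
  classical
  set d := finrank K V with hd
  let b : Basis (Fin d) K V := Module.finBasis K V
  set M := LinearMap.BilinForm.toMatrix b φ with hM
  set A := LinearMap.toMatrix b b u.toLinearMap with hA
  have hcomp : φ.comp u.toLinearMap u.toLinearMap = μ • φ := by
    ext x y
    simpa using hu x y
  have hmat : A.transpose * M * A = μ • M := by
    rw [hA, hM, ← BilinForm.toMatrix_comp b b φ u.toLinearMap u.toLinearMap, hcomp, _root_.map_smul]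
  have hdetM : M.det ≠ 0 := by
    have hnd : φ.Nondegenerate :=
      LinearMap.BilinForm.Nondegenerate.ofSeparatingLeft (fun x hx => hnondeg x hx)
    exact (LinearMap.BilinForm.nondegenerate_iff_det_ne_zero b).mp hnd
  have hdet : A.det * A.det = μ ^ d := by
    have h := congrArg Matrix.det hmat
    rw [Matrix.det_mul, Matrix.det_mul, Matrix.det_transpose A, Matrix.det_smul,
      Fintype.card_fin] at h
    have h' : A.det * A.det * M.det = μ ^ d * M.det := by linear_combination h
    exact mul_right_cancel₀ hdetM h'
  obtain ⟨e, he⟩ := hodd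
  have hν2 : (A.det / μ ^ e) ^ 2 = μ := by
    rw [div_pow, pow_two, hdet, he]
    rw [show 2 * e + 1 = e * 2 + 1 by ring, pow_succ, pow_mul]
    field_simp
  exact ⟨A.det / μ ^ e, fun h0 => hμ (by rw [← hν2, h0]; ring), hν2⟩





/-- restriction of an automorphism to an invariant submodule -/
noncomputable def restrEquiv {M : Type v} [AddCommGroup M] [Module K M]
    (W : Submodule K M) (v : M ≃ₗ[K] M)
    (h1 : ∀ x ∈ W, v x ∈ W) (h2 : ∀ x ∈ W, v.symm x ∈ W) : W ≃ₗ[K] W :=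
  LinearEquiv.ofLinear (v.toLinearMap.restrict h1) (v.symm.toLinearMap.restrict h2)
    (by ext x; simp [LinearMap.restrict_apply])
    (by ext x; simp [LinearMap.restrict_apply])

omit [CharZero K] in
@[simp] lemma restrEquiv_apply {M : Type v} [AddCommGroup M] [Module K M]
    (W : Submodule K M) (v : M ≃ₗ[K] M) (h1) (h2) (x : W) :
    (restrEquiv W v h1 h2 x : M) = v x := rfl

theorem lemL (n : ℕ) : ∀ (M : Type v) [AddCommGroup M] [Module K M] [FiniteDimensional K M],
    finrank K M = n →
    ∀ H : Subgroup (M ≃ₗ[K] M), Finite H →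
      (∀ u ∈ H, u * u = 1) → (∀ u ∈ H, ∀ v ∈ H, u * v = v * u) →
      Nat.card H ∣ 2 ^ n := by
  induction n using Nat.strong_induction_on with
  | _ n IH =>
  intro M _ _ _ hrank H hHfin hinv hcomm
  classical
  rcases Nat.eq_zero_or_pos n with hn0 | hnpos
  · -- M trivial
    subst hn0
    haveI : Subsingleton M := finrank_zero_iff.mp hrank
    have h1 : ∀ u : H, u = 1 := fun u => Subtype.ext (by ext x; exact Subsingleton.elim _ _)
    have hcard : Nat.card H = 1 := by
      rw [Nat.card_eq_one_iff_unique]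
      exact ⟨⟨fun a b => (h1 a).trans (h1 b).symm⟩, ⟨1⟩⟩
    rw [hcard]; exact one_dvd _
  haveI : Nontrivial M := by
    rw [← Module.finrank_pos_iff (R := K)]; omega
  by_cases hscal : ∀ u ∈ H, u = 1 ∨ u = (LinearEquiv.neg K : M ≃ₗ[K] M)
  · -- H ⊆ {±1}
    have hneg1 : (LinearEquiv.neg K : M ≃ₗ[K] M) ≠ 1 := by
      intro h
      obtain ⟨x, hx⟩ := exists_ne (0 : M)
      have := congrArg (fun f : M ≃ₗ[K] M => f x) h
      simp only [LinearEquiv.neg_apply] at this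
      have h1x : (1 : M ≃ₗ[K] M) x = x := rfl
      rw [h1x] at this
      have h2x : (2 : K) • x = 0 := by
        rw [two_smul]
        linear_combination (norm := module) -this
      exact hx (by simpa using smul_eq_zero.mp h2x)
    have hinj : Function.Injective (fun u : H => decide ((u : M ≃ₗ[K] M) = 1)) := by
      intro a b hab
      have hiff := decide_eq_decide.mp hab
      rcases hscal a a.2 with h1 | h1 <;> rcases hscal b b.2 with h2 | h2
      · exact Subtype.ext (h1.trans h2.symm)
      · exact absurd (h2 ▸ hiff.mp h1) hneg1
      · exact absurd (h1 ▸ hiff.mpr h2) hneg1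
      · exact Subtype.ext (h1.trans h2.symm)
    have hle : Nat.card H ≤ 2 := by
      have := Nat.card_le_card_of_injective _ hinj
      simpa using this
    have hpos : 0 < Nat.card H := Nat.card_pos
    have h2 : Nat.card H ∣ 2 := by interval_cases h : (Nat.card H) <;> norm_num
    exact h2.trans (dvd_pow_self 2 (by omega))
  · push_neg at hscal
    obtain ⟨u₀, hu₀H, hu₀1, hu₀n⟩ := hscal
    have hu₀sq : ∀ x : M, u₀ (u₀ x) = x := by
      intro x
      exact congrArg (fun f : M ≃ₗ[K] M => f x) (hinv u₀ hu₀H)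
    set e : M →ₗ[K] M := u₀.toLinearMap with he
    set W₁ : Submodule K M := LinearMap.ker (e - LinearMap.id) with hW₁
    set W₂ : Submodule K M := LinearMap.ker (e + LinearMap.id) with hW₂
    have memW₁ : ∀ x : M, x ∈ W₁ ↔ u₀ x = x := by
      intro x; simp [hW₁, he, sub_eq_zero, LinearMap.mem_ker]
    have memW₂ : ∀ x : M, x ∈ W₂ ↔ u₀ x = -x := by
      intro x
      simp only [hW₂, he, LinearMap.mem_ker, LinearMap.add_apply, LinearMap.id_apply,
        LinearEquiv.coe_coe, add_eq_zero_iff_eq_neg]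
    have hcompl : IsCompl W₁ W₂ := by
      constructor
      · rw [disjoint_iff, Submodule.eq_bot_iff]
        intro x hx
        rw [Submodule.mem_inf] at hx
        have h1 := (memW₁ x).mp hx.1
        have h2 := (memW₂ x).mp hx.2
        have h2x : (2 : K) • x = 0 := by
          rw [two_smul]
          linear_combination (norm := module) h1.symm.trans h2
        simpa using smul_eq_zero.mp h2x
      · rw [codisjoint_iff, Submodule.eq_top_iff']
        intro x
        have hx : x = (2:K)⁻¹ • (x + u₀ x) + (2:K)⁻¹ • (x - u₀ x) := by
          have h2 : (2:K) ≠ 0 := two_ne_zero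
          rw [smul_add, smul_sub]
          rw [show ((2:K)⁻¹ • x + (2:K)⁻¹ • u₀ x) + ((2:K)⁻¹ • x - (2:K)⁻¹ • u₀ x)
            = ((2:K)⁻¹ * 2) • x by module]
          rw [inv_mul_cancel₀ h2, one_smul]
        rw [hx]
        refine Submodule.add_mem_sup (Submodule.smul_mem _ _ ?_) (Submodule.smul_mem _ _ ?_)
        · rw [memW₁]; simp [hu₀sq, add_comm]
        · rw [memW₂]; simp only [map_sub, hu₀sq]; module
    have hrk : finrank K W₁ + finrank K W₂ = n := by
      rw [← hrank]; exact Submodule.finrank_add_eq_of_isCompl hcompl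
    have hd₁pos : 0 < finrank K W₁ := by
      rw [Module.finrank_pos_iff (R := K)]
      obtain ⟨x, hx⟩ : ∃ x : M, u₀ x ≠ -x := by
        by_contra h; push_neg at h
        exact hu₀n (by ext y; simpa using h y)
      have hmem : x + u₀ x ∈ W₁ := (memW₁ _).mpr (by simp [hu₀sq, add_comm])
      have hne : x + u₀ x ≠ 0 := fun h => hx (by linear_combination (norm := module) h)
      exact ⟨⟨⟨x + u₀ x, hmem⟩, 0, fun h => hne (by simpa [Submodule.mk_eq_zero] using h)⟩⟩
    have hd₂pos : 0 < finrank K W₂ := by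
      rw [Module.finrank_pos_iff (R := K)]
      obtain ⟨x, hx⟩ : ∃ x : M, u₀ x ≠ x := by
        by_contra h; push_neg at h
        exact hu₀1 (by ext y; simpa using h y)
      have hmem : x - u₀ x ∈ W₂ := (memW₂ _).mpr (by simp only [map_sub, hu₀sq]; module)
      have hne : x - u₀ x ≠ 0 := fun h => hx (by linear_combination (norm := module) -h)
      exact ⟨⟨⟨x - u₀ x, hmem⟩, 0, fun h => hne (by simpa [Submodule.mk_eq_zero] using h)⟩⟩
    -- invariance of the eigenspaces
    have hcvx : ∀ v ∈ H, ∀ x : M, u₀ (v x) = v (u₀ x) := by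
      intro v hv x
      exact congrArg (fun f : M ≃ₗ[K] M => f x) (hcomm u₀ hu₀H v hv)
    have hinv₁ : ∀ v ∈ H, ∀ x ∈ W₁, v x ∈ W₁ := by
      intro v hv x hx
      rw [memW₁] at hx ⊢
      rw [hcvx v hv, hx]
    have hinv₂ : ∀ v ∈ H, ∀ x ∈ W₂, v x ∈ W₂ := by
      intro v hv x hx
      rw [memW₂] at hx ⊢
      rw [hcvx v hv, hx]; simp
    have hsymm₁ : ∀ v : H, ∀ x ∈ W₁, ((v : M ≃ₗ[K] M)).symm x ∈ W₁ :=
      fun v x hx => hinv₁ _ (H.inv_mem v.2) x hx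
    have hsymm₂ : ∀ v : H, ∀ x ∈ W₂, ((v : M ≃ₗ[K] M)).symm x ∈ W₂ :=
      fun v x hx => hinv₂ _ (H.inv_mem v.2) x hx
    -- restriction homomorphisms
    let ρ₁ : H →* (W₁ ≃ₗ[K] W₁) :=
      { toFun := fun v => restrEquiv W₁ v (hinv₁ v v.2) (hsymm₁ v)
        map_one' := by ext x; rfl
        map_mul' := by intro a b; ext x; rfl }
    let ρ₂ : H →* (W₂ ≃ₗ[K] W₂) :=
      { toFun := fun v => restrEquiv W₂ v (hinv₂ v v.2) (hsymm₂ v)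
        map_one' := by ext x; rfl
        map_mul' := by intro a b; ext x; rfl }
    set H₁ := ρ₁.range with hH₁
    set H₂ := ρ₂.range with hH₂
    have hρinj : Function.Injective (ρ₁.prod ρ₂) := by
      intro a b hab
      have h1 : ρ₁ a = ρ₁ b := congrArg Prod.fst hab
      have h2 : ρ₂ a = ρ₂ b := congrArg Prod.snd hab
      have hab1 : ∀ x ∈ W₁, (a : M ≃ₗ[K] M) x = (b : M ≃ₗ[K] M) x := by
        intro x hx
        exact congrArg (fun f : W₁ ≃ₗ[K] W₁ => (f ⟨x, hx⟩ : M)) h1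
      have hab2 : ∀ x ∈ W₂, (a : M ≃ₗ[K] M) x = (b : M ≃ₗ[K] M) x := by
        intro x hx
        exact congrArg (fun f : W₂ ≃ₗ[K] W₂ => (f ⟨x, hx⟩ : M)) h2
      apply Subtype.ext
      apply LinearEquiv.toLinearMap_injective
      ext x
      have hxmem : x ∈ W₁ ⊔ W₂ := by
        rw [hcompl.codisjoint.eq_top]; trivial
      obtain ⟨y, hy, z, hz, rfl⟩ := Submodule.mem_sup.mp hxmem
      simp only [LinearMap.coe_comp, LinearEquiv.coe_coe, Function.comp_apply,
        map_add]
      rw [hab1 y hy, hab2 z hz]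
    -- cardinality chase
    haveI hfin₁ : Finite H₁ := Finite.of_surjective
      (fun v : H => (⟨ρ₁ v, ⟨v, rfl⟩⟩ : H₁)) (by rintro ⟨_, v, rfl⟩; exact ⟨v, rfl⟩)
    haveI hfin₂ : Finite H₂ := Finite.of_surjective
      (fun v : H => (⟨ρ₂ v, ⟨v, rfl⟩⟩ : H₂)) (by rintro ⟨_, v, rfl⟩; exact ⟨v, rfl⟩)
    have hsq : ∀ v : H, v * v = 1 := fun v => Subtype.ext (hinv v v.2)
    have hcm : ∀ v w : H, v * w = w * v := fun v w => Subtype.ext (hcomm v v.2 w w.2)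
    have hIH₁ : Nat.card H₁ ∣ 2 ^ finrank K W₁ := by
      refine IH _ (by omega) W₁ rfl H₁ hfin₁ ?_ ?_
      · rintro _ ⟨v, rfl⟩
        rw [← map_mul, hsq v, map_one]
      · rintro _ ⟨v, rfl⟩ _ ⟨w, rfl⟩
        rw [← map_mul, ← map_mul, hcm v w]
    have hIH₂ : Nat.card H₂ ∣ 2 ^ finrank K W₂ := by
      refine IH _ (by omega) W₂ rfl H₂ hfin₂ ?_ ?_
      · rintro _ ⟨v, rfl⟩
        rw [← map_mul, hsq v, map_one]
      · rintro _ ⟨v, rfl⟩ _ ⟨w, rfl⟩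
        rw [← map_mul, ← map_mul, hcm v w]
    have hdvd : Nat.card H ∣ Nat.card (H₁.prod H₂) := by
      refine Subgroup.card_dvd_of_injective
        ((ρ₁.prod ρ₂).codRestrict (H₁.prod H₂) fun v => ⟨⟨v, rfl⟩, ⟨v, rfl⟩⟩) ?_
      intro a b hab
      exact hρinj (congrArg Subtype.val hab)
    have hcardprod : Nat.card (H₁.prod H₂) = Nat.card H₁ * Nat.card H₂ := by
      rw [Nat.card_congr (Subgroup.prodEquiv H₁ H₂).toEquiv, Nat.card_prod]
    calc Nat.card H ∣ Nat.card H₁ * Nat.card H₂ := hcardprod ▸ hdvd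
      _ ∣ 2 ^ finrank K W₁ * 2 ^ finrank K W₂ := mul_dvd_mul hIH₁ hIH₂
      _ = 2 ^ n := by rw [← pow_add, hrk]






theorem iso2 [FiniteDimensional K V] (hd : 0 < finrank K V)
    (hroots : ∀ n : ℕ, 0 < n → ∃ ζ : K, IsPrimitiveRoot ζ n)
    (φ : LinearMap.BilinForm K V)
    (haniso : ∀ v : V, v ≠ 0 → φ v v ≠ 0)
    (G : Subgroup (projOrthogonalGroup φ)) (hGfin : Finite G)
    (t : similitudeSubgroup φ)
    (hiso : ∀ x y : V, φ ((t : V ≃ₗ[K] V) x) ((t : V ≃ₗ[K] V) y) = φ x y)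
    (hmem : (QuotientGroup.mk t : projOrthogonalGroup φ) ∈ G) :
    t * t = 1 := by
  haveI := hGfin
  set gG : G := ⟨QuotientGroup.mk t, hmem⟩ with hgG
  set n := orderOf gG with hn
  have hnpos : 0 < n := orderOf_pos gG
  have h1 : gG ^ n = 1 := pow_orderOf_eq_one gG
  have h2 : (QuotientGroup.mk (t ^ n) : projOrthogonalGroup φ) = 1 := by
    have : ((gG ^ n : G) : projOrthogonalGroup φ) = 1 := by rw [h1]; rfl
    simpa using this
  have hscal : t ^ n ∈ scalarSubgroup φ := (QuotientGroup.eq_one_iff _).mp h2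
  obtain ⟨c, hc0, hcx⟩ := hscal
  set T : V →ₗ[K] V := ((t : V ≃ₗ[K] V) : V →ₗ[K] V) with hT
  have hTk : ∀ k : ℕ, ∀ x : V, (T ^ k) x = ((t ^ k : similitudeSubgroup φ) : V ≃ₗ[K] V) x := by
    intro k
    induction k with
    | zero => intro x; rfl
    | succ k ih =>
      intro x
      rw [pow_succ, pow_succ]
      have : ((t ^ k * t : similitudeSubgroup φ) : V ≃ₗ[K] V) x
          = ((t ^ k : similitudeSubgroup φ) : V ≃ₗ[K] V) ((t : V ≃ₗ[K] V) x) := rfl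
      rw [this, Module.End.mul_apply, ih]
      rfl
  have hTn : ∀ x : V, (T ^ n) x = c • x := fun x => by rw [hTk n x]; exact hcx x
  have hisoT : ∀ k : ℕ, ∀ x y : V, φ ((T ^ k) x) ((T ^ k) y) = φ x y := by
    intro k
    induction k with
    | zero => intro x y; rfl
    | succ k ih =>
      intro x y
      rw [pow_succ]
      simp only [Module.End.mul_apply]
      rw [show (T ^ k) (T x) = (T ^ k) (T x) from rfl]
      calc φ ((T ^ k) (T x)) ((T ^ k) (T y)) = φ (T x) (T y) := ih (T x) (T y)
        _ = φ x y := hiso x y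
  haveI : Nontrivial V := by rw [← Module.finrank_pos_iff (R := K)]; omega
  obtain ⟨v₀, hv₀⟩ := exists_ne (0 : V)
  have hc2 : c * c = 1 := by
    have h := hisoT n v₀ v₀
    rw [hTn v₀] at h
    simp only [map_smul, LinearMap.smul_apply, smul_eq_mul] at h
    have hφ : φ v₀ v₀ ≠ 0 := haniso v₀ hv₀
    have : (c * c - 1) * φ v₀ v₀ = 0 := by linear_combination h
    rcases mul_eq_zero.mp this with h' | h'
    · linear_combination h'
    · exact absurd h' hφ
  have hT2n : T ^ (2 * n) = 1 := by
    rw [two_mul, pow_add]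
    ext x
    rw [Module.End.mul_apply, hTn, hTn, smul_smul, hc2, one_smul]
    rfl
  obtain ⟨ζ, hζ⟩ := hroots (2 * n) (by omega)
  have hcore : T ^ 2 = 1 := core_sq φ haniso T hiso (2 * n) (by omega) ζ hζ hT2n
  apply Subtype.ext
  apply LinearEquiv.toLinearMap_injective
  ext x
  have hx := congrArg (fun f : V →ₗ[K] V => f x) hcore
  simp only [pow_two, Module.End.mul_apply, Module.End.one_apply] at hx
  exact hx

theorem lift_iso [FiniteDimensional K V] (hodd : Odd (finrank K V))
    (φ : LinearMap.BilinForm K V)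
    (hnondeg : ∀ x : V, (∀ y : V, φ x y = 0) → x = 0)
    (g : projOrthogonalGroup φ) :
    ∃ t : similitudeSubgroup φ,
      (∀ x y : V, φ ((t : V ≃ₗ[K] V) x) ((t : V ≃ₗ[K] V) y) = φ x y) ∧
      (QuotientGroup.mk t : projOrthogonalGroup φ) = g := by
  obtain ⟨u, rfl⟩ := QuotientGroup.mk_surjective g
  obtain ⟨μ, hμ, hu⟩ := u.2
  obtain ⟨ν, hν, hν2⟩ := mu_square hodd φ hnondeg (u : V ≃ₗ[K] V) μ hμ hu
  let w : V ≃ₗ[K] V := LinearEquiv.ofLinear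
    (ν⁻¹ • ((u : V ≃ₗ[K] V) : V →ₗ[K] V))
    (ν • (((u : V ≃ₗ[K] V).symm : V →ₗ[K] V)))
    (by ext x
        simp only [LinearMap.comp_apply, LinearMap.smul_apply, map_smul, smul_smul,
          LinearMap.id_apply]
        rw [mul_inv_cancel₀ hν, one_smul]
        exact (u : V ≃ₗ[K] V).apply_symm_apply x)
    (by ext x
        simp only [LinearMap.comp_apply, LinearMap.smul_apply, map_smul, smul_smul,
          LinearMap.id_apply]
        rw [inv_mul_cancel₀ hν, one_smul]
        exact (u : V ≃ₗ[K] V).symm_apply_apply x)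
  have hwx : ∀ x : V, w x = ν⁻¹ • (u : V ≃ₗ[K] V) x := fun x => rfl
  have hwsymm : ∀ x : V, w.symm x = ν • (u : V ≃ₗ[K] V).symm x := fun x => rfl
  have hinv1 : ν⁻¹ * ν⁻¹ * μ = 1 := by
    rw [← hν2, pow_two]
    field_simp
  have hwiso : ∀ x y : V, φ (w x) (w y) = φ x y := by
    intro x y
    rw [hwx, hwx]
    simp only [map_smul, LinearMap.smul_apply, smul_eq_mul]
    rw [hu x y]
    linear_combination (φ x y) * hinv1
  have hwmem : w ∈ similitudeSubgroup φ := ⟨1, one_ne_zero, fun x y => by rw [one_mul]; exact hwiso x y⟩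
  refine ⟨⟨w, hwmem⟩, hwiso, ?_⟩
  rw [QuotientGroup.eq]
  refine ⟨ν, hν, fun x => ?_⟩
  have h5 : (((⟨w, hwmem⟩ : similitudeSubgroup φ)⁻¹ * u : similitudeSubgroup φ) : V ≃ₗ[K] V) x
      = w.symm ((u : V ≃ₗ[K] V) x) := rfl
  rw [h5, hwsymm, LinearEquiv.symm_apply_apply]



end Aux

/-- Let `K` be a field of characteristic zero containing all roots of
unity, `d ≥ 3` an odd integer, `V` a `d`-dimensional `K`-vector space, and `φ` a
nondegenerate symmetric anisotropic `K`-bilinear form on `V`. Let `G` be a finite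
subgroup of `PO(V,φ) = GO(V,φ)/(K*·1_V)`. Then `G` is commutative, every non-identity
element of `G` has order `2`, and the order of `G` divides `2 ^ (d-1)`. -/
theorem stmt11 {K V : Type*} [Field K] [CharZero K] [AddCommGroup V] [Module K V]
    [FiniteDimensional K V] (hd3 : 3 ≤ Module.finrank K V) (hodd : Odd (Module.finrank K V))
    (hroots : ∀ n : ℕ, 0 < n → ∃ ζ : K, IsPrimitiveRoot ζ n)
    (φ : LinearMap.BilinForm K V)
    (hsymm : ∀ x y : V, φ x y = φ y x)
    (hnondeg : ∀ x : V, (∀ y : V, φ x y = 0) → x = 0)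
    (haniso : ∀ v : V, v ≠ 0 → φ v v ≠ 0)
    (G : Subgroup (projOrthogonalGroup φ)) (hGfin : Finite G) :
    (∀ a ∈ G, ∀ b ∈ G, a * b = b * a) ∧ (∀ g ∈ G, g ≠ 1 → orderOf g = 2) ∧
      Nat.card G ∣ 2 ^ (Module.finrank K V - 1) := by
  classical
  have hd : 0 < Module.finrank K V := by omega
  haveI : Nontrivial V := by rw [← Module.finrank_pos_iff (R := K)]; omega
  haveI := hGfin
  -- every element of G squares to 1
  have hsq : ∀ g ∈ G, g * g = 1 := by
    intro g hg
    obtain ⟨t, hiso, rfl⟩ := lift_iso hodd φ hnondeg g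
    have h := iso2 hd hroots φ haniso G hGfin t hiso hg
    have h2 : (QuotientGroup.mk (t * t) : projOrthogonalGroup φ) = 1 := by rw [h]; rfl
    simpa using h2
  have hcommG : ∀ a ∈ G, ∀ b ∈ G, a * b = b * a := by
    intro a ha b hb
    have hab := hsq (a * b) (G.mul_mem ha hb)
    have hainv : a⁻¹ = a := by rw [← mul_eq_one_iff_inv_eq]; exact hsq a ha
    have hbinv : b⁻¹ = b := by rw [← mul_eq_one_iff_inv_eq]; exact hsq b hb
    have habinv : (a * b)⁻¹ = a * b := by rw [← mul_eq_one_iff_inv_eq]; exact hab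
    calc a * b = (a * b)⁻¹ := habinv.symm
      _ = b⁻¹ * a⁻¹ := mul_inv_rev a b
      _ = b * a := by rw [hainv, hbinv]
  refine ⟨hcommG, ?_, ?_⟩
  · intro g hg hg1
    exact orderOf_eq_prime (by rw [pow_two]; exact hsq g hg) hg1
  · -- cardinality bound
    set Hh : Subgroup (similitudeSubgroup φ) :=
      { carrier := {t | (∀ x y : V, φ ((t : V ≃ₗ[K] V) x) ((t : V ≃ₗ[K] V) y) = φ x y) ∧
          (QuotientGroup.mk t : projOrthogonalGroup φ) ∈ G}
        one_mem' := ⟨fun x y => rfl, by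
          have h1 : (QuotientGroup.mk (1 : similitudeSubgroup φ) : projOrthogonalGroup φ) = 1 := rfl
          rw [h1]; exact G.one_mem⟩
        mul_mem' := by
          rintro a b ⟨hai, haG⟩ ⟨hbi, hbG⟩
          refine ⟨fun x y => ?_, ?_⟩
          · have h1 : ((a * b : similitudeSubgroup φ) : V ≃ₗ[K] V) x
                = (a : V ≃ₗ[K] V) ((b : V ≃ₗ[K] V) x) := rfl
            have h2 : ((a * b : similitudeSubgroup φ) : V ≃ₗ[K] V) y
                = (a : V ≃ₗ[K] V) ((b : V ≃ₗ[K] V) y) := rfl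
            rw [h1, h2, hai, hbi]
          · have h3 : (QuotientGroup.mk (a * b) : projOrthogonalGroup φ)
                = QuotientGroup.mk a * QuotientGroup.mk b := rfl
            rw [h3]; exact G.mul_mem haG hbG
        inv_mem' := by
          rintro a ⟨hai, haG⟩
          refine ⟨fun x y => ?_, ?_⟩
          · have h := hai (((a⁻¹ : similitudeSubgroup φ) : V ≃ₗ[K] V) x)
                (((a⁻¹ : similitudeSubgroup φ) : V ≃ₗ[K] V) y)
            rw [show (a : V ≃ₗ[K] V) (((a⁻¹ : similitudeSubgroup φ) : V ≃ₗ[K] V) x) = x from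
                (a : V ≃ₗ[K] V).apply_symm_apply x,
              show (a : V ≃ₗ[K] V) (((a⁻¹ : similitudeSubgroup φ) : V ≃ₗ[K] V) y) = y from
                (a : V ≃ₗ[K] V).apply_symm_apply y] at h
            exact h.symm
          · have h3 : (QuotientGroup.mk a⁻¹ : projOrthogonalGroup φ)
                = (QuotientGroup.mk a)⁻¹ := rfl
            rw [h3]; exact G.inv_mem haG } with hHh
    have hHinv : ∀ t : similitudeSubgroup φ, t ∈ Hh → t * t = 1 := by
      intro t ht
      exact iso2 hd hroots φ haniso G hGfin t ht.1 ht.2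
    have hHcomm : ∀ t ∈ Hh, ∀ s ∈ Hh, t * s = s * t := by
      intro t ht s hs
      have hts := hHinv (t * s) (Hh.mul_mem ht hs)
      have htinv : t⁻¹ = t := by rw [← mul_eq_one_iff_inv_eq]; exact hHinv t ht
      have hsinv : s⁻¹ = s := by rw [← mul_eq_one_iff_inv_eq]; exact hHinv s hs
      have htsinv : (t * s)⁻¹ = t * s := by rw [← mul_eq_one_iff_inv_eq]; exact hts
      calc t * s = (t * s)⁻¹ := htsinv.symm
        _ = s⁻¹ * t⁻¹ := mul_inv_rev t s
        _ = s * t := by rw [htinv, hsinv]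
    let π : Hh →* projOrthogonalGroup φ :=
      (QuotientGroup.mk' (scalarSubgroup φ)).comp Hh.subtype
    have hπ : ∀ w : Hh, π w = QuotientGroup.mk (w : similitudeSubgroup φ) := fun w => rfl
    have hrange : π.range = G := by
      apply le_antisymm
      · rintro _ ⟨w, rfl⟩
        exact w.2.2
      · intro g hg
        obtain ⟨t, hiso, ht⟩ := lift_iso hodd φ hnondeg g
        exact ⟨⟨t, hiso, ht ▸ hg⟩, ht⟩
    -- classification of the kernel
    have hker : ∀ w : Hh, π w = 1 →
        (w : similitudeSubgroup φ) = 1 ∨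
        ((w : similitudeSubgroup φ) : V ≃ₗ[K] V) = (LinearEquiv.neg K : V ≃ₗ[K] V) := by
      intro w hw
      rw [hπ] at hw
      obtain ⟨c, hc0, hcx⟩ := (QuotientGroup.eq_one_iff _).mp hw
      obtain ⟨v₀, hv₀⟩ := exists_ne (0 : V)
      have hw2 := hHinv w w.2
      have h1 : ((w : similitudeSubgroup φ) : V ≃ₗ[K] V)
          (((w : similitudeSubgroup φ) : V ≃ₗ[K] V) v₀) = v₀ := by
        have := congrArg (fun f : similitudeSubgroup φ => (f : V ≃ₗ[K] V) v₀) hw2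
        exact this
      rw [hcx v₀, map_smul, hcx v₀, smul_smul] at h1
      have hcc : c * c = 1 := by
        have h2 : (c * c - 1) • v₀ = 0 := by
          rw [sub_smul, one_smul, h1, sub_self]
        rcases smul_eq_zero.mp h2 with h' | h'
        · linear_combination h'
        · exact absurd h' hv₀
      rcases mul_self_eq_one_iff.mp hcc with hc1 | hc1
      · left
        apply Subtype.ext
        apply LinearEquiv.toLinearMap_injective
        ext x
        have := hcx x
        rw [hc1, one_smul] at this
        exact this
      · right
        apply LinearEquiv.toLinearMap_injective
        ext x
        have := hcx x
        rw [hc1] at this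
        simpa using this
    -- the element -1
    have hnegsim : (LinearEquiv.neg K : V ≃ₗ[K] V) ∈ similitudeSubgroup φ :=
      ⟨1, one_ne_zero, fun x y => by simp⟩
    have hnegscal : (⟨LinearEquiv.neg K, hnegsim⟩ : similitudeSubgroup φ) ∈ scalarSubgroup φ :=
      ⟨-1, by norm_num, fun x => by simp⟩
    have hnegmk : (QuotientGroup.mk (⟨LinearEquiv.neg K, hnegsim⟩ : similitudeSubgroup φ) :
        projOrthogonalGroup φ) = 1 := (QuotientGroup.eq_one_iff _).mpr hnegscal
    have hnegmem : (⟨LinearEquiv.neg K, hnegsim⟩ : similitudeSubgroup φ) ∈ Hh := by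
      refine ⟨fun x y => by simp, ?_⟩
      rw [hnegmk]; exact G.one_mem
    set σ : Hh := ⟨⟨LinearEquiv.neg K, hnegsim⟩, hnegmem⟩ with hσ
    have hσker : σ ∈ π.ker := by
      rw [MonoidHom.mem_ker, hπ]
      exact hnegmk
    have hσne : σ ≠ 1 := by
      intro h
      obtain ⟨x, hx⟩ := exists_ne (0 : V)
      have h2 := congrArg (fun w : Hh => ((w : similitudeSubgroup φ) : V ≃ₗ[K] V) x) h
      simp only [hσ] at h2
      have h3 : -x = x := by
        simpa [LinearEquiv.neg_apply] using h2
      have h2x : (2 : K) • x = 0 := by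
        rw [two_smul]
        linear_combination (norm := module) -h3
      exact hx (by simpa using smul_eq_zero.mp h2x)
    have hclass : ∀ k : π.ker, k = ⟨1, π.ker.one_mem⟩ ∨ k = ⟨σ, hσker⟩ := by
      intro k
      rcases hker k.1 (MonoidHom.mem_ker.mp k.2) with h | h
      · left
        exact Subtype.ext (Subtype.ext h)
      · right
        exact Subtype.ext (Subtype.ext (Subtype.ext h))
    let e : Bool → π.ker := fun b => if b then ⟨σ, hσker⟩ else ⟨1, π.ker.one_mem⟩
    have hesurj : Function.Surjective e := by
      intro k
      rcases hclass k with h | h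
      · exact ⟨false, h.symm⟩
      · exact ⟨true, h.symm⟩
    have heinj : Function.Injective e := by
      intro a b hab
      cases a <;> cases b <;> simp only [e, if_true, if_false] at hab
      · rfl
      · exact absurd (congrArg Subtype.val hab).symm hσne
      · exact absurd (congrArg Subtype.val hab) hσne
      · rfl
    have hcard2 : Nat.card π.ker = 2 := by
      rw [← Nat.card_eq_of_bijective e ⟨heinj, hesurj⟩]
      simp
    -- finiteness
    haveI hfinrange : Finite π.range := by rw [hrange]; exact hGfin
    haveI hfinq : Finite (Hh ⧸ π.ker) :=
      Finite.of_equiv _ (QuotientGroup.quotientKerEquivRange π).symm.toEquiv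
    haveI hfinker : Finite π.ker := Finite.of_surjective e hesurj
    haveI hfinH : Finite Hh :=
      Finite.of_equiv _ (Subgroup.groupEquivQuotientProdSubgroup (s := π.ker)).symm
    -- cardinality computation
    have hcardH : Nat.card Hh = Nat.card G * 2 := by
      rw [Subgroup.card_eq_card_quotient_mul_card_subgroup π.ker, hcard2]
      congr 1
      rw [Nat.card_congr (QuotientGroup.quotientKerEquivRange π).toEquiv]
      rw [hrange]
    -- transfer to a subgroup of automorphisms and apply the key dimension bound
    set HV : Subgroup (V ≃ₗ[K] V) := Hh.map (similitudeSubgroup φ).subtype with hHV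
    haveI hfinHV : Finite HV :=
      Finite.of_equiv _ (Subgroup.equivMapOfInjective Hh _ Subtype.coe_injective).toEquiv
    have hcardHV : Nat.card Hh = Nat.card HV :=
      Nat.card_congr (Subgroup.equivMapOfInjective Hh _ Subtype.coe_injective).toEquiv
    have hdvd : Nat.card HV ∣ 2 ^ Module.finrank K V := by
      refine lemL (Module.finrank K V) V rfl HV hfinHV ?_ ?_
      · rintro _ ⟨t, ht, rfl⟩
        rw [← map_mul, hHinv t ht, map_one]
      · rintro _ ⟨t, ht, rfl⟩ _ ⟨s, hs, rfl⟩
        rw [← map_mul, ← map_mul, hHcomm t ht s hs]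
    have hfinal : Nat.card G * 2 ∣ 2 ^ (Module.finrank K V - 1) * 2 := by
      rw [← hcardH, hcardHV]
      have h2d : 2 ^ (Module.finrank K V - 1) * 2 = 2 ^ Module.finrank K V := by
        rw [← pow_succ]
        congr 1
        omega
      rw [h2d]
      exact hdvd
    exact (Nat.mul_dvd_mul_iff_right (by norm_num : 0 < 2)).mp hfinal
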